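/- Let λ be a regular cardinal and X a linearly ordered set with |X| = λ > 2^{ℵ_α}, such that every subset Y ⊆ X of cardinality λ contains an element y with both {z ∈ Y : z < y} and {z ∈ Y : z > y} of cardinality λ. Then X contains a completely λ-full subset of order type ω_{α+1} or of reverse order type ω_{α+1}. -/

import Mathlib

open Cardinal Set

universe u

/-- `Y` is `l`-full on the right in `X`: for every `y ∈ Y`, the union of the
intervals `(y, y')_X` over larger elements `y' ∈ Y` has cardinality `l`. -/
def FullRight {X : Type u} [LinearOrder X] (l : Cardinal.{u}) (Y : Set X) : Prop :=
  ∀ y ∈ Y, #{x : X | ∃ y' ∈ Y, y < y' ∧ y < x ∧ x < y'} = l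

/-- `Y` is `l`-full on the left in `X`. -/
def FullLeft {X : Type u} [LinearOrder X] (l : Cardinal.{u}) (Y : Set X) : Prop :=
  ∀ y ∈ Y, #{x : X | ∃ y' ∈ Y, y' < y ∧ y' < x ∧ x < y} = l

/-- `Y` is completely `l`-full in `X`: every interval of `X` between two
elements of `Y` has cardinality `l`. -/
def CompletelyFull {X : Type u} [LinearOrder X] (l : Cardinal.{u}) (Y : Set X) : Prop :=
  ∀ y ∈ Y, ∀ y' ∈ Y, y < y' → #{x : X | y < x ∧ x < y'} = l

section
variable {X : Type u} [LinearOrder X] (l : Cardinal.{u})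

def sm (x y : X) : Prop := #(Set.Ioo (min x y) (max x y)) < l

variable {l}

lemma sm_refl (hl : 0 < l) (x : X) : sm l x x := by
  simp [sm, Set.Ioo_self, hl]

lemma sm_symm {x y : X} (h : sm l x y) : sm l y x := by
  rwa [sm, min_comm, max_comm]

lemma sm_of_lt {x y : X} (h : x ≤ y) (hI : #(Set.Ioo x y) < l) : sm l x y := by
  rwa [sm, min_eq_left h, max_eq_right h]

lemma sm_Ioo {x y : X} (h : x ≤ y) (hs : sm l x y) : #(Set.Ioo x y) < l := by
  rwa [sm, min_eq_left h, max_eq_right h] at hs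

lemma sm_trans (hl : ℵ₀ ≤ l) {x y z : X} (h1 : sm l x y) (h2 : sm l y z) : sm l x z := by
  wlog hxz : x ≤ z generalizing x z
  · exact sm_symm (this (sm_symm h2) (sm_symm h1) (le_of_not_ge hxz))
  refine sm_of_lt hxz ?_
  rcases le_total y x with hyx | hxy
  · exact lt_of_le_of_lt (mk_le_mk_of_subset (Set.Ioo_subset_Ioo_left hyx)) (sm_Ioo (hyx.trans hxz) h2)
  rcases le_total z y with hzy | hyz
  · exact lt_of_le_of_lt (mk_le_mk_of_subset (Set.Ioo_subset_Ioo_right hzy)) (sm_Ioo (hxz.trans hzy) h1)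
  · have hsub : Set.Ioo x z ⊆ Set.Ioo x y ∪ ({y} ∪ Set.Ioo y z) := by
      intro w hw
      rcases lt_trichotomy w y with h | h | h
      · exact Or.inl ⟨hw.1, h⟩
      · exact Or.inr (Or.inl (by simp [h]))
      · exact Or.inr (Or.inr ⟨h, hw.2⟩)
    calc #(Set.Ioo x z) ≤ #(Set.Ioo x y ∪ ({y} ∪ Set.Ioo y z) : Set X) := mk_le_mk_of_subset hsub
      _ ≤ #(Set.Ioo x y) + #(({y} : Set X) ∪ Set.Ioo y z : Set X) := mk_union_le _ _
      _ ≤ #(Set.Ioo x y) + (#({y} : Set X) + #(Set.Ioo y z)) := by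
          gcongr; exact mk_union_le _ _
      _ < l := by
          apply Cardinal.add_lt_of_lt hl (sm_Ioo hxy h1)
          apply Cardinal.add_lt_of_lt hl _ (sm_Ioo hyz h2)
          simpa using lt_of_lt_of_le Cardinal.one_lt_aleph0 hl

end

section Part2
variable {X : Type u} [LinearOrder X] {l : Cardinal.{u}}
lemma class_small (hl : l.IsRegular) (hX : #X = l)
    (hsplit : ∀ Y : Set X, #Y = l →
      ∃ y ∈ Y, #{z ∈ Y | z < y} = l ∧ #{z ∈ Y | y < z} = l)
    (x : X) : #{y : X | sm l x y} < l := by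
  set C := {y : X | sm l x y} with hC
  have hle : #C ≤ l := hX ▸ mk_set_le C
  rcases lt_or_eq_of_le hle with h | h
  · exact h
  exfalso
  obtain ⟨y, hyC, hL, -⟩ := hsplit C h
  obtain ⟨y₁, hy₁, -, hM⟩ := hsplit _ hL
  have hy₁L : y₁ ∈ C ∧ y₁ < y := hy₁
  have hsub : {z ∈ {z ∈ C | z < y} | y₁ < z} ⊆ Set.Ioo y₁ y := fun z hz => ⟨hz.2, hz.1.2⟩
  have : l ≤ #(Set.Ioo y₁ y) := hM ▸ mk_le_mk_of_subset hsub
  have hsm : sm l y₁ y := sm_trans hl.aleph0_le (sm_symm hy₁L.1) hyC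
  exact absurd (lt_of_le_of_lt this (sm_Ioo hy₁L.2.le hsm)) (lt_irrefl l)

lemma quot_large (hl : l.IsRegular) (hX : #X = l)
    (hsplit : ∀ Y : Set X, #Y = l →
      ∃ y ∈ Y, #{z ∈ Y | z < y} = l ∧ #{z ∈ Y | y < z} = l)
    (s : Setoid X) (hs : ∀ x y, s.r x y ↔ sm l x y) :
    l ≤ #(Quotient s) := by
  by_contra hQ
  push_neg at hQ
  have key : #X = Cardinal.sum (fun q : Quotient s => #{x : X // Quotient.mk s x = q}) := by
    rw [← Cardinal.mk_sigma]
    exact (Cardinal.mk_congr (Equiv.sigmaFiberEquiv (Quotient.mk s))).symm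
  have hfib : ∀ q : Quotient s, #{x : X // Quotient.mk s x = q} < l := by
    intro q
    refine lt_of_le_of_lt ?_ (class_small hl hX hsplit (Quotient.out q))
    refine ⟨⟨fun x => ⟨x.1, ?_⟩, fun a b hab => Subtype.ext (by simpa using congrArg Subtype.val hab)⟩⟩
    have hmk : Quotient.mk s x.1 = Quotient.mk s (Quotient.out q) := by
      rw [x.2, Quotient.out_eq]
    exact sm_symm ((hs _ _).mp (Quotient.exact hmk))
  have := Cardinal.sum_lt_of_isRegular hl hQ hfib
  rw [← key, hX] at this
  exact lt_irrefl l this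
end Part2

section Ram
variable {B I : Type u} [LinearOrder B] [LinearOrder I] [WellFoundedLT B] [WellFoundedLT I]

variable (c : I → I → Prop)

attribute [local instance] Classical.propDecidable

/-- The class of `y`s behaving like `x` through all levels `b' < b`, w.r.t. the
level function `t`. -/
def clsAux (t : B → I → I) (b : B) (x : I) : Set I :=
  {y | (∀ b' < b, t b' y ≠ y) ∧
    ∀ b' < b, t b' y = t b' x ∧ (c (t b' x) y ↔ c (t b' x) x)}

lemma clsAux_congr {t t' : B → I → I} {b : B} (h : ∀ b' < b, t b' = t' b') (x : I) :
    clsAux c t b x = clsAux c t' b x := by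
  unfold clsAux
  ext y
  constructor <;> rintro ⟨h1, h2⟩ <;> refine ⟨fun b' hb' => ?_, fun b' hb' => ?_⟩
  · rw [← h b' hb']; exact h1 b' hb'
  · rw [← h b' hb']; exact h2 b' hb'
  · rw [h b' hb']; exact h1 b' hb'
  · rw [h b' hb']; exact h2 b' hb'

/-- The ramification tree functional. -/
noncomputable def ramF (b : B) (rec : ∀ b', b' < b → I → I) (x : I) : I :=
  if hs : (clsAux c (fun b'' => if h : b'' < b then rec b'' h else id) b x).Nonempty then
    (wellFounded_lt (α := I)).min _ hs
  else x

/-- The ramification tree: `ram c b x` is the distinguished (`<`-least) element of the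
class of `x` at level `b`. -/
noncomputable def ram : B → I → I :=
  (wellFounded_lt (α := B)).fix (ramF c)

lemma ram_unfold (b : B) : ram c b = ramF c b (fun b' _ => ram c b') :=
  WellFounded.fix_eq _ _ b

lemma ram_eq (b : B) (x : I) :
    ram c b x = if hs : (clsAux c (ram c) b x).Nonempty then
      (wellFounded_lt (α := I)).min _ hs else x := by
  have hc : clsAux c (fun b'' => if h : b'' < b then ram c b'' else id) b x
      = clsAux c (ram c) b x :=
    clsAux_congr c (fun b' hb' => by rw [dif_pos hb']) x
  rw [ram_unfold]
  simp only [ramF, hc]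


variable {c}

lemma mem_cls_self {b : B} {x : I} (h : ∀ b' < b, ram c b' x ≠ x) :
    x ∈ clsAux c (ram c) b x :=
  ⟨h, fun _ _ => ⟨rfl, Iff.rfl⟩⟩

lemma ram_mem {b : B} {x : I} (hne : (clsAux c (ram c) b x).Nonempty) :
    ram c b x ∈ clsAux c (ram c) b x := by
  rw [ram_eq, dif_pos hne]
  exact WellFounded.min_mem _ _ hne

lemma ram_not_lt {b : B} {x y : I} (hy : y ∈ clsAux c (ram c) b x) : ¬ y < ram c b x := by
  rw [ram_eq, dif_pos ⟨y, hy⟩]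
  exact WellFounded.not_lt_min _ _ hy

lemma cls_eq_of_mem {b : B} {x y : I} (hy : y ∈ clsAux c (ram c) b x) :
    clsAux c (ram c) b y = clsAux c (ram c) b x := by
  ext z
  constructor <;> rintro ⟨hz1, hz2⟩ <;> refine ⟨hz1, fun b' hb' => ?_⟩
  · obtain ⟨hyx, hyc⟩ := hy.2 b' hb'
    obtain ⟨hzy, hzc⟩ := hz2 b' hb'
    rw [hyx] at hzc
    exact ⟨hzy.trans hyx, hzc.trans hyc⟩
  · obtain ⟨hyx, hyc⟩ := hy.2 b' hb'
    obtain ⟨hzx, hzc⟩ := hz2 b' hb'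
    rw [hyx]
    exact ⟨hzx, hzc.trans hyc.symm⟩

lemma ram_eq_of_mem {b : B} {x y : I} (hy : y ∈ clsAux c (ram c) b x) :
    ram c b y = ram c b x := by
  have hcls := cls_eq_of_mem hy
  have hne : (clsAux c (ram c) b x).Nonempty := ⟨y, hy⟩
  have hne' : (clsAux c (ram c) b y).Nonempty := hcls ▸ hne
  have h1 : ram c b x ∈ clsAux c (ram c) b y := hcls ▸ ram_mem hne
  have h2 : ram c b y ∈ clsAux c (ram c) b x := hcls ▸ ram_mem hne'
  exact le_antisymm (not_lt.1 (ram_not_lt h1)) (not_lt.1 (ram_not_lt h2))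

lemma exists_injective_of_all_dead (hall : ∀ x : I, ∃ b : B, ram c b x = x) :
    ∃ F : I → Σ b : B, (Set.Iio b → Prop), Function.Injective F := by
  classical
  have hw := wellFounded_lt (α := B)
  have hne : ∀ x : I, {b : B | ram c b x = x}.Nonempty := fun x => hall x
  set d : I → B := fun x => hw.min {b : B | ram c b x = x} (hne x) with hd
  have hdx : ∀ x, ram c (d x) x = x := fun x => hw.min_mem _ (hne x)
  have hdlt : ∀ x, ∀ b < d x, ram c b x ≠ x := fun x b hb hmem =>
    hw.not_lt_min {b : B | ram c b x = x} hmem hb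
  set Fn : I → Σ b : B, (Set.Iio b → Prop) :=
    fun x => ⟨d x, fun b' => c (ram c b'.1 x) x⟩ with hFn
  refine ⟨Fn, ?_⟩
  intro x y hF
  have h1 : d x = d y := congrArg Sigma.fst hF
  have h2 : ∀ (u : Set.Iio (Fn x).1) (v : Set.Iio (Fn y).1), u.1 = v.1 →
      (Fn x).2 u = (Fn y).2 v := by
    rw [hF]
    rintro u v huv
    rw [Subtype.ext huv]
  have h2' : ∀ b : B, b < d x → b < d y → c (ram c b x) x = c (ram c b y) y :=
    fun b hbx hby => h2 ⟨b, hbx⟩ ⟨b, hby⟩ rfl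
  have main : ∀ b : B, b ≤ d x → ram c b x = ram c b y := by
    intro b
    refine hw.induction (C := fun b => b ≤ d x → ram c b x = ram c b y) b ?_
    intro b IH hb
    have hymem : y ∈ clsAux c (ram c) b x := by
      refine ⟨fun b' hb' => hdlt y b' (lt_of_lt_of_le hb' (h1 ▸ hb)), fun b' hb' => ?_⟩
      have hIH := IH b' hb' ((le_of_lt hb').trans hb)
      have e := h2' b' (lt_of_lt_of_le hb' hb) (lt_of_lt_of_le hb' (h1 ▸ hb))
      rw [← hIH] at e
      exact ⟨hIH.symm, iff_of_eq e.symm⟩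
    exact (ram_eq_of_mem hymem).symm
  have hx1 := hdx x
  have hy1 := hdx y
  rw [← hx1, main (d x) le_rfl, h1, hy1]

end Ram

section Urysohn
theorem urysohn {T : Type u} [LinearOrder T] {κ : Cardinal.{u}} (hκ : ℵ₀ ≤ κ)
    (hT : Order.succ (2 ^ κ) ≤ #T) :
    ∃ f : (Order.succ κ).ord.ToType → T, StrictMono f ∨ StrictAnti f := by
  classical
  set B := (Order.succ κ).ord.ToType with hB
  set I := (Order.succ ((2 : Cardinal.{u}) ^ κ)).ord.ToType with hI
  have hgle : #I ≤ #T := by rw [hI, mk_ord_toType]; exact hT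
  obtain ⟨g⟩ := (Cardinal.le_def I T).mp hgle
  set c : I → I → Prop := fun i j => g i < g j with hc
  have hBcard : #B = Order.succ κ := mk_ord_toType _
  have hIcard : #I = Order.succ ((2 : Cardinal.{u}) ^ κ) := mk_ord_toType _
  -- there is an element alive at every level
  have hx : ∃ x : I, ∀ b : B, ram c b x ≠ x := by
    by_contra hall
    push_neg at hall
    obtain ⟨F, hF⟩ := exists_injective_of_all_dead (B := B) hall
    have h1 : #I ≤ #(Σ b : B, (Set.Iio b → Prop)) := Cardinal.mk_le_of_injective hF
    have h2 : #(Σ b : B, (Set.Iio b → Prop)) ≤ Order.succ κ * 2 ^ κ := by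
      rw [Cardinal.mk_sigma]
      calc (Cardinal.sum fun b : B => #(Set.Iio b → Prop))
          ≤ Cardinal.sum (fun _ : B => 2 ^ κ) := by
            refine Cardinal.sum_le_sum _ _ (fun b => ?_)
            have hIio : #(Set.Iio b) ≤ κ :=
              Order.lt_succ_iff.mp (mk_Iio_ord_toType b)
            calc #(Set.Iio b → Prop) = 2 ^ #(Set.Iio b) := Cardinal.mk_set (α := Set.Iio b)
              _ ≤ 2 ^ κ := Cardinal.power_le_power_left two_ne_zero hIio
        _ = #B * 2 ^ κ := Cardinal.sum_const' _ _
        _ = Order.succ κ * 2 ^ κ := by rw [hBcard]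
    have h3 : Order.succ κ * 2 ^ κ ≤ 2 ^ κ := by
      calc Order.succ κ * 2 ^ κ ≤ 2 ^ κ * 2 ^ κ := by
            exact mul_le_mul_left (Order.succ_le_iff.mpr (Cardinal.cantor κ)) _
        _ = 2 ^ (κ + κ) := (Cardinal.power_add _ _ _).symm
        _ = 2 ^ κ := by rw [Cardinal.add_eq_self hκ]
    have := (h1.trans h2).trans h3
    rw [hIcard] at this
    exact absurd (Order.succ_le_iff.mp this) (lt_irrefl _)
  obtain ⟨x, halive⟩ := hx
  set a : B → I := fun b => ram c b x with ha
  have hmem : ∀ b : B, a b ∈ clsAux c (ram c) b x :=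
    fun b => ram_mem ⟨x, mem_cls_self (fun b' _ => halive b')⟩
  have hcoh : ∀ b' b : B, b' < b → ram c b' (a b) = a b' ∧ (c (a b') (a b) ↔ c (a b') x) :=
    fun b' b h => (hmem b).2 b' h
  have hne : ∀ b' b : B, b' < b → a b' ≠ a b := by
    intro b' b h heq
    have := (hmem b).1 b' h
    rw [(hcoh b' b h).1] at this
    exact this heq
  -- a color class of full size
  have key : ∀ S' : Set B, #S' = Order.succ κ →
      ((∀ b ∈ S', c (a b) x) ∨ (∀ b ∈ S', ¬ c (a b) x)) →
      ∃ f : (Order.succ κ).ord.ToType → T, StrictMono f ∨ StrictAnti f := by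
    intro S' hcard hsign
    have h1 : @Ordinal.type _ ((· < ·) : (Order.succ κ).ord.ToType → (Order.succ κ).ord.ToType → Prop) isWellOrder_lt
        ≤ @Ordinal.type _ ((· < ·) : S' → S' → Prop) isWellOrder_lt := by
      rw [Ordinal.type_toType]
      refine Cardinal.ord_le.mpr ?_
      rw [Ordinal.card_type]
      exact hcard.ge
    obtain ⟨e⟩ := (@Ordinal.type_le_iff' _ _ _ _ isWellOrder_lt isWellOrder_lt).mp h1
    set f : B → T := fun b => g (a (e b).1) with hf
    refine ⟨f, ?_⟩
    rcases hsign with hsign | hsign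
    · left
      intro b1 b2 h12
      have hlt : ((e b1).1 : B) < (e b2).1 := e.map_rel_iff.mpr h12
      exact ((hcoh _ _ hlt).2).mpr (hsign _ (e b1).2)
    · right
      intro b1 b2 h12
      have hlt : ((e b1).1 : B) < (e b2).1 := e.map_rel_iff.mpr h12
      have hnlt : ¬ c (a (e b1).1) (a (e b2).1) := fun hcc =>
        hsign _ (e b1).2 (((hcoh _ _ hlt).2).mp hcc)
      have hnee : g (a (e b1).1) ≠ g (a (e b2).1) := fun heq =>
        hne _ _ hlt (g.injective heq)
      exact lt_of_le_of_ne (not_lt.mp hnlt) (Ne.symm hnee)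
  set S : Set B := {b : B | c (a b) x} with hS
  have hfull : #S = Order.succ κ ∨ #((Sᶜ : Set B)) = Order.succ κ := by
    by_contra hboth
    push_neg at hboth
    have hSle : #S ≤ κ := Order.lt_succ_iff.mp
      (lt_of_le_of_ne (hBcard ▸ mk_set_le S) hboth.1)
    have hScle : #((Sᶜ : Set B)) ≤ κ := Order.lt_succ_iff.mp
      (lt_of_le_of_ne (hBcard ▸ mk_set_le Sᶜ) hboth.2)
    have : #B ≤ #S + #((Sᶜ : Set B)) := by
      rw [← Cardinal.mk_univ, ← Set.union_compl_self S]
      exact Cardinal.mk_union_le _ _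
    rw [hBcard] at this
    have : Order.succ κ ≤ κ := this.trans (by
      calc #S + #((Sᶜ : Set B)) ≤ κ + κ := add_le_add hSle hScle
        _ = κ := Cardinal.add_eq_self hκ)
    exact absurd (lt_of_lt_of_le (Order.lt_succ κ) this) (lt_irrefl _)
  rcases hfull with h | h
  · exact key S h (Or.inl (fun b hb => hb))
  · exact key Sᶜ h (Or.inr (fun b hb => hb))
end Urysohn

section Main

/-- Theorem 3.2: if `|X| = l > 2 ^ ℵ_α` with `l` regular and the splitting
hypothesis `(∗∗)` holds, then `X` contains a completely `l`-full subset of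
order type `ω_{α+1}` or of reverse order type `ω_{α+1}`. -/
theorem stmt9 (α : Ordinal.{u}) (l : Cardinal.{u}) (hl : l.IsRegular)
    (X : Type u) [LinearOrder X] (hX : #X = l) (hbig : 2 ^ Cardinal.aleph α < l)
    (hsplit : ∀ Y : Set X, #Y = l →
      ∃ y ∈ Y, #{z ∈ Y | z < y} = l ∧ #{z ∈ Y | y < z} = l) :
    ∃ f : (Cardinal.aleph (α + 1)).ord.ToType → X,
      (StrictMono f ∨ StrictAnti f) ∧ CompletelyFull l (Set.range f) := by
  classical
  have hl0 : ℵ₀ ≤ l := hl.aleph0_le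
  have hκ : ℵ₀ ≤ Cardinal.aleph α := aleph0_le_aleph α
  have haleph : Cardinal.aleph (α + 1) = Order.succ (Cardinal.aleph α) := by
    rw [Ordinal.add_one_eq_succ, Cardinal.aleph_succ]
  rw [haleph]
  set s : Setoid X := ⟨sm l,
    ⟨fun x => sm_refl (lt_of_lt_of_le aleph0_pos hl0) x,
     fun h => sm_symm h, fun h1 h2 => sm_trans hl0 h1 h2⟩⟩ with hs
  have hQ : l ≤ #(Quotient s) := quot_large hl hX hsplit s (fun _ _ => Iff.rfl)
  set T : Set X := Set.range (fun q : Quotient s => q.out) with hTdef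
  have hTQ : #T = #(Quotient s) := by
    have := mk_range_eq_of_injective (f := fun q : Quotient s => q.out) Quotient.out_injective
    rwa [lift_id, lift_id] at this
  have hT : Order.succ ((2 : Cardinal.{u}) ^ Cardinal.aleph α) ≤ #T := by
    rw [hTQ]
    exact (Order.succ_le_iff.mpr hbig).trans hQ
  obtain ⟨f0, hf0⟩ := urysohn (T := ↥T) hκ hT
  have hdistinct : ∀ y y' : ↥T, (y : X) ≠ (y' : X) → ¬ sm l (y : X) (y' : X) := by
    rintro ⟨y, ⟨q, rfl⟩⟩ ⟨y', ⟨q', rfl⟩⟩ hne hsm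
    have : q = q' := by
      rw [← Quotient.out_eq q, ← Quotient.out_eq q']
      exact Quotient.sound hsm
    exact hne (by rw [this])
  refine ⟨fun b => (f0 b : X), ?_, ?_⟩
  · rcases hf0 with hmono | hanti
    · exact Or.inl (fun a b h => Subtype.coe_lt_coe.mpr (hmono h))
    · exact Or.inr (fun a b h => Subtype.coe_lt_coe.mpr (hanti h))
  · rintro y ⟨b, rfl⟩ y' ⟨b', rfl⟩ hlt
    have hnsm : ¬ sm l ((f0 b : X)) ((f0 b' : X)) := hdistinct _ _ (ne_of_lt hlt)
    have hge : l ≤ #(Set.Ioo (f0 b : X) (f0 b' : X)) := by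
      by_contra hcon
      push_neg at hcon
      exact hnsm (sm_of_lt (le_of_lt hlt) hcon)
    have hle : #(Set.Ioo (f0 b : X) (f0 b' : X)) ≤ l := hX ▸ mk_set_le _
    exact le_antisymm hle hge

end Main
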